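/- arXiv:1306.6511 — 5 statements merged into one kernel-verified Lean document; each statement's English description precedes it below -/
import Mathlib

section
/- For all n ≥ 1, ⟨n⟩ = Σ_{k≥0} (n/(n-k)) C(n-k, k) s^{n-2k} t^k as polynomials in s,t. -/
/-- Generalized Fibonacci polynomials: {0}=0, {1}=1, {n}=s{n-1}+t{n-2}. -/
def gfib {R : Type*} [CommRing R] (s t : R) : ℕ → R
  | 0 => 0
  | 1 => 1
  | n + 2 => s * gfib s t (n + 1) + t * gfib s t n

/-- Generalized Lucas polynomials: ⟨0⟩=2, ⟨1⟩=s, ⟨n⟩=s⟨n-1⟩+t⟨n-2⟩. -/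
def gluc {R : Type*} [CommRing R] (s t : R) : ℕ → R
  | 0 => 2
  | 1 => s
  | n + 2 => s * gluc s t (n + 1) + t * gluc s t n

lemma gfib_sum (s t : ℝ) : ∀ n, gfib s t (n + 1) =
    ∑ k ∈ Finset.range (n + 1), ((n - k).choose k : ℝ) * s ^ (n - 2 * k) * t ^ k := by
  intro n
  induction n using Nat.strong_induction_on with
  | _ n ih =>
    match n with
    | 0 => simp [gfib]
    | 1 => simp [gfib, Finset.sum_range_succ]
    | (n + 2) =>
      have h1 := ih (n + 1) (by omega)
      have h0 := ih n (by omega)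
      show s * gfib s t (n + 2) + t * gfib s t (n + 1) = _
      rw [h1, h0]
      have hB : ∑ k ∈ Finset.range (n + 2), ((n - k).choose k : ℝ) * s ^ (n - 2 * k) * t ^ (k + 1)
          = t * ∑ k ∈ Finset.range (n + 1), ((n - k).choose k : ℝ) * s ^ (n - 2 * k) * t ^ k := by
        rw [Finset.mul_sum, Finset.sum_range_succ]
        have e : n - (n + 1) = 0 := by omega
        have z : Nat.choose 0 (n + 1) = 0 := Nat.choose_eq_zero_of_lt (by omega)
        rw [e, z]
        simp only [Nat.cast_zero, zero_mul, add_zero]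
        exact Finset.sum_congr rfl (fun k _ => by ring)
      have hA : s * ∑ k ∈ Finset.range (n + 2), ((n + 1 - k).choose k : ℝ) * s ^ (n + 1 - 2 * k) * t ^ k
          = s ^ (n + 2) + ∑ k ∈ Finset.range (n + 2), ((n - k).choose (k + 1) : ℝ) * s ^ (n - 2 * k) * t ^ (k + 1) := by
        rw [Finset.mul_sum]
        conv_lhs => rw [Finset.sum_range_succ']
        conv_rhs => rw [Finset.sum_range_succ]
        have e : n - (n + 1) = 0 := by omega
        have z : Nat.choose 0 (n + 1 + 1) = 0 := Nat.choose_eq_zero_of_lt (by omega)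
        rw [e, z]
        simp only [Nat.cast_zero, zero_mul, add_zero, Nat.choose_zero_right, Nat.cast_one,
          one_mul, pow_zero, mul_one, Nat.sub_zero, Nat.mul_zero]
        rw [add_comm]
        congr 1
        · rw [← pow_succ']
        · refine Finset.sum_congr rfl (fun k hk => ?_)
          rcases le_or_gt (2 * k + 1) n with h | h
          · have e1 : n + 1 - (k + 1) = n - k := by omega
            have e2 : n + 1 - 2 * (k + 1) = n - 2 * k - 1 := by omega
            have e3 : s ^ (n - 2 * k) = s * s ^ (n - 2 * k - 1) := by
              rw [← pow_succ']; congr 1; omega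
            rw [e1, e2, e3]
            ring
          · have c1 : (n + 1 - (k + 1)).choose (k + 1) = 0 :=
              Nat.choose_eq_zero_of_lt (by omega)
            have c2 : (n - k).choose (k + 1) = 0 :=
              Nat.choose_eq_zero_of_lt (by omega)
            rw [c1, c2]
            simp
      rw [Finset.sum_range_succ' (fun k => ((n + 2 - k).choose k : ℝ) * s ^ (n + 2 - 2 * k) * t ^ k)]
      have pascal : ∀ k ∈ Finset.range (n + 2),
          ((n + 2 - (k + 1)).choose (k + 1) : ℝ) * s ^ (n + 2 - 2 * (k + 1)) * t ^ (k + 1)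
          = ((n - k).choose (k + 1) : ℝ) * s ^ (n - 2 * k) * t ^ (k + 1)
            + ((n - k).choose k : ℝ) * s ^ (n - 2 * k) * t ^ (k + 1) := by
        intro k hk
        rcases le_or_gt k n with h | h
        · have e1 : n + 2 - (k + 1) = (n - k) + 1 := by omega
          have e2 : n + 2 - 2 * (k + 1) = n - 2 * k := by omega
          rw [e1, e2, Nat.choose_succ_succ']
          push_cast
          ring
        · have hk1 : k = n + 1 := by simp only [Finset.mem_range] at hk; omega
          subst hk1
          have e : n - (n + 1) = 0 := by omega
          rw [e]
          simp [Nat.choose_eq_zero_of_lt]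
      rw [Finset.sum_congr rfl pascal, Finset.sum_add_distrib, hB, hA]
      simp
      ring

lemma gluc_fib (s t : ℝ) : ∀ n, gluc s t (n + 2) = gfib s t (n + 3) + t * gfib s t (n + 1) := by
  intro n
  induction n using Nat.strong_induction_on with
  | _ n ih =>
    match n with
    | 0 => show s * gluc s t 1 + t * gluc s t 0 = _; simp [gluc, gfib]; ring
    | 1 => show s * gluc s t 2 + t * gluc s t 1 = _
           rw [show gluc s t 2 = s * gluc s t 1 + t * gluc s t 0 from rfl]
           simp [gluc, gfib]; ring
    | (n + 2) =>
      have h1 := ih (n + 1) (by omega)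
      have h0 := ih n (by omega)
      show s * gluc s t (n + 3) + t * gluc s t (n + 2) = gfib s t (n + 5) + t * gfib s t (n + 3)
      rw [h1, h0,
        show gfib s t (n + 5) = s * gfib s t (n + 4) + t * gfib s t (n + 3) from rfl,
        show gfib s t (n + 3) = s * gfib s t (n + 2) + t * gfib s t (n + 1) from rfl]
      ring

theorem stmt2 (s t : ℝ) (n : ℕ) (hn : 1 ≤ n) :
    gluc s t n =
      ∑ k ∈ Finset.range (n / 2 + 1),
        ((n : ℝ) / ((n : ℝ) - (k : ℝ))) * ((n - k).choose k : ℝ) * s ^ (n - 2 * k) * t ^ k := by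
  obtain _ | _ | m := n
  · omega
  · simp [gluc]
  · show gluc s t (m + 2) =
      ∑ k ∈ Finset.range ((m + 2) / 2 + 1),
        (((m + 2 : ℕ) : ℝ) / (((m + 2 : ℕ) : ℝ) - (k : ℝ))) *
          (((m + 2) - k).choose k : ℝ) * s ^ ((m + 2) - 2 * k) * t ^ k
    have e1 : ∑ k ∈ Finset.range ((m + 2) / 2 + 1),
          (((m + 2 : ℕ) : ℝ) / (((m + 2 : ℕ) : ℝ) - (k : ℝ))) *
            (((m + 2) - k).choose k : ℝ) * s ^ ((m + 2) - 2 * k) * t ^ k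
        = ∑ k ∈ Finset.range (m + 3),
          (((m + 2 : ℕ) : ℝ) / (((m + 2 : ℕ) : ℝ) - (k : ℝ))) *
            (((m + 2) - k).choose k : ℝ) * s ^ ((m + 2) - 2 * k) * t ^ k := by
      refine Finset.sum_subset (Finset.range_subset_range.2 (by omega)) (fun k hk hk2 => ?_)
      simp only [Finset.mem_range] at hk hk2
      have z : ((m + 2) - k).choose k = 0 := Nat.choose_eq_zero_of_lt (by omega)
      rw [z]
      simp
    have e2 : ∑ k ∈ Finset.range (m + 3),
          (((m + 2 : ℕ) : ℝ) / (((m + 2 : ℕ) : ℝ) - (k : ℝ))) *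
            (((m + 2) - k).choose k : ℝ) * s ^ ((m + 2) - 2 * k) * t ^ k
        = (∑ k ∈ Finset.range (m + 2),
            (((m + 2 : ℕ) : ℝ) / (((m + 2 : ℕ) : ℝ) - ((k + 1 : ℕ) : ℝ))) *
              (((m + 2) - (k + 1)).choose (k + 1) : ℝ) * s ^ ((m + 2) - 2 * (k + 1)) * t ^ (k + 1))
          + (((m + 2 : ℕ) : ℝ) / (((m + 2 : ℕ) : ℝ) - ((0 : ℕ) : ℝ))) *
              (((m + 2) - 0).choose 0 : ℝ) * s ^ ((m + 2) - 2 * 0) * t ^ 0 :=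
      Finset.sum_range_succ' _ (m + 2)
    have e3 : ∀ k ∈ Finset.range (m + 2),
        (((m + 2 : ℕ) : ℝ) / (((m + 2 : ℕ) : ℝ) - ((k + 1 : ℕ) : ℝ))) *
            (((m + 2) - (k + 1)).choose (k + 1) : ℝ) * s ^ ((m + 2) - 2 * (k + 1)) * t ^ (k + 1)
        = (((m + 2) - (k + 1)).choose (k + 1) : ℝ) * s ^ ((m + 2) - 2 * (k + 1)) * t ^ (k + 1)
          + ((m - k).choose k : ℝ) * s ^ (m - 2 * k) * t ^ (k + 1) := by
      intro k hk
      simp only [Finset.mem_range] at hk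
      rcases le_or_gt k m with h | h
      · -- main case
        have ee1 : (m + 2) - (k + 1) = (m - k) + 1 := by omega
        have ee2 : (m + 2) - 2 * (k + 1) = m - 2 * k := by omega
        rw [ee1, ee2]
        have hc := Nat.add_one_mul_choose_eq (m - k) k
        have hc' : ((m : ℝ) - k + 1) * ((m - k).choose k : ℝ)
            = (((m - k) + 1).choose (k + 1) : ℝ) * ((k : ℝ) + 1) := by
          exact_mod_cast congrArg (fun x : ℕ => (x : ℝ))
            (by push_cast [Nat.cast_sub h] at hc ⊢; exact_mod_cast hc :
              ((m - k) + 1) * (m - k).choose k = ((m - k) + 1).choose (k + 1) * (k + 1))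
        have hd : ((m + 2 : ℕ) : ℝ) - ((k + 1 : ℕ) : ℝ) ≠ 0 := by
          push_cast
          have : (k : ℝ) ≤ (m : ℝ) := by exact_mod_cast h
          intro hzero
          nlinarith
        have key : (((m + 2 : ℕ) : ℝ) / (((m + 2 : ℕ) : ℝ) - ((k + 1 : ℕ) : ℝ))) *
              (((m - k) + 1).choose (k + 1) : ℝ)
            = (((m - k) + 1).choose (k + 1) : ℝ) + ((m - k).choose k : ℝ) := by
          rw [div_mul_eq_mul_div, div_eq_iff hd]
          have hmk : ((m - k : ℕ) : ℝ) = (m : ℝ) - k := by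
            push_cast [Nat.cast_sub h]; ring
          push_cast [Nat.cast_sub h] at hc' ⊢
          linarith [hc']
        linear_combination (s ^ (m - 2 * k) * t ^ (k + 1)) * key
      · -- vanishing case: k = m + 1
        have hk1 : k = m + 1 := by omega
        subst hk1
        have z1 : (m + 2) - (m + 1 + 1) = 0 := by omega
        have z2 : m - (m + 1) = 0 := by omega
        rw [z1, z2, Nat.choose_eq_zero_of_lt (by omega : 0 < m + 1 + 1),
          Nat.choose_eq_zero_of_lt (by omega : 0 < m + 1)]
        simp
    have e3sum : (∑ k ∈ Finset.range (m + 2),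
            (((m + 2 : ℕ) : ℝ) / (((m + 2 : ℕ) : ℝ) - ((k + 1 : ℕ) : ℝ))) *
              (((m + 2) - (k + 1)).choose (k + 1) : ℝ) * s ^ ((m + 2) - 2 * (k + 1)) * t ^ (k + 1))
        = (∑ k ∈ Finset.range (m + 2),
            (((m + 2) - (k + 1)).choose (k + 1) : ℝ) * s ^ ((m + 2) - 2 * (k + 1)) * t ^ (k + 1))
          + ∑ k ∈ Finset.range (m + 2), ((m - k).choose k : ℝ) * s ^ (m - 2 * k) * t ^ (k + 1) := by
      rw [← Finset.sum_add_distrib]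
      exact Finset.sum_congr rfl e3
    have hgf : gfib s t (m + 3)
        = (∑ k ∈ Finset.range (m + 2),
            (((m + 2) - (k + 1)).choose (k + 1) : ℝ) * s ^ ((m + 2) - 2 * (k + 1)) * t ^ (k + 1))
          + (((m + 2) - 0).choose 0 : ℝ) * s ^ ((m + 2) - 2 * 0) * t ^ 0 := by
      rw [show m + 3 = (m + 2) + 1 from rfl, gfib_sum s t (m + 2)]
      exact Finset.sum_range_succ' _ (m + 2)
    have hgf1 : t * gfib s t (m + 1)
        = ∑ k ∈ Finset.range (m + 2), ((m - k).choose k : ℝ) * s ^ (m - 2 * k) * t ^ (k + 1) := by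
      rw [gfib_sum s t m, Finset.mul_sum]
      conv_rhs => rw [Finset.sum_range_succ]
      have z : m - (m + 1) = 0 := by omega
      have z2 : Nat.choose 0 (m + 1) = 0 := Nat.choose_eq_zero_of_lt (by omega)
      rw [z, z2]
      simp only [Nat.cast_zero, zero_mul, add_zero]
      exact Finset.sum_congr rfl (fun k _ => by ring)
    have hF0 : (((m + 2 : ℕ) : ℝ) / (((m + 2 : ℕ) : ℝ) - ((0 : ℕ) : ℝ))) *
          (((m + 2) - 0).choose 0 : ℝ) * s ^ ((m + 2) - 2 * 0) * t ^ 0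
        = (((m + 2) - 0).choose 0 : ℝ) * s ^ ((m + 2) - 2 * 0) * t ^ 0 := by
      have h2 : ((m + 2 : ℕ) : ℝ) ≠ 0 := by positivity
      rw [Nat.cast_zero, sub_zero, div_self h2, one_mul]
    rw [e1, e2, e3sum, hF0, gluc_fib s t m, hgf, hgf1]
    ring
end

section
/- For m, n ≥ 1, gcd({m}, {n}) = {gcd(m,n)} in the polynomial ring ℤ[s,t]; in particular m divides n if and only if {m} divides {n}. -/
section Lemmas

variable {R : Type*} [CommRing R] (s t : R)

lemma gfib_zero : gfib s t 0 = 0 := rfl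
lemma gfib_one : gfib s t 1 = 1 := rfl
lemma gfib_succ_succ (n : ℕ) :
    gfib s t (n + 2) = s * gfib s t (n + 1) + t * gfib s t n := rfl

/-- addition formula -/
lemma gfib_add (m n : ℕ) :
    gfib s t (m + n + 1) =
      gfib s t (m + 1) * gfib s t (n + 1) + t * gfib s t m * gfib s t n := by
  induction n using Nat.twoStepInduction with
  | zero => simp [gfib_zero, gfib_one]
  | one =>
    show gfib s t (m + 2) = _
    rw [gfib_succ_succ]
    show _ = gfib s t (m + 1) * gfib s t 2 + t * gfib s t m * gfib s t 1
    rw [gfib_succ_succ, gfib_one, gfib_zero]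
    ring
  | more n ih1 ih2 =>
    have e1 : m + (n + 2) + 1 = (m + n + 1) + 2 := by ring
    have e2 : m + (n + 1) + 1 = (m + n + 1) + 1 := by ring
    rw [e1, gfib_succ_succ]
    rw [e2] at ih2
    rw [ih1, ih2, gfib_succ_succ s t (n + 1), gfib_succ_succ s t n]
    ring

lemma gfib_dvd_mul (m k : ℕ) (hm : 1 ≤ m) : gfib s t m ∣ gfib s t (m * k) := by
  induction k with
  | zero => simp [gfib_zero]
  | succ k ih =>
    obtain ⟨p, rfl⟩ : ∃ p, m = p + 1 := ⟨m - 1, by omega⟩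
    have e : (p + 1) * (k + 1) = (p + 1) * k + p + 1 := by ring
    rw [e, gfib_add]
    exact dvd_add (dvd_mul_left _ _) ((ih.mul_left t).mul_right _)

/-- Cassini-type identity -/
lemma gfib_cassini (n : ℕ) :
    gfib s t (n + 1) ^ 2 = gfib s t (n + 2) * gfib s t n + (-1 : R) ^ n * t ^ n := by
  induction n with
  | zero => simp [gfib_zero, gfib_one]
  | succ n ih =>
    simp only [show n + 1 + 1 = n + 2 from rfl, show n + 1 + 2 = n + 3 from rfl]
    rw [show (3 : ℕ) = 1 + 2 from rfl, ← Nat.add_assoc, gfib_succ_succ s t (n + 1)]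
    rw [gfib_succ_succ s t n] at *
    linear_combination (-t) * ih

lemma gfib_eq_pow_add (n : ℕ) : ∃ c, gfib s t (n + 1) = s ^ n + t * c := by
  induction n using Nat.twoStepInduction with
  | zero => exact ⟨0, by simp [gfib_one]⟩
  | one => exact ⟨0, by simp [gfib_succ_succ, gfib_one, gfib_zero]⟩
  | more n _ ih2 =>
    obtain ⟨c, hc⟩ := ih2
    refine ⟨s * c + gfib s t (n + 1), ?_⟩
    rw [show n + 2 + 1 = n + 1 + 2 from rfl, gfib_succ_succ s t (n + 1), hc]
    ring

lemma map_gfib {S : Type*} [CommRing S] (f : R →+* S) (n : ℕ) :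
    f (gfib s t n) = gfib (f s) (f t) n := by
  induction n using Nat.twoStepInduction with
  | zero => simp [gfib_zero]
  | one => simp [gfib_one]
  | more n ih1 ih2 => rw [gfib_succ_succ, gfib_succ_succ, map_add, map_mul, map_mul, ih1, ih2]

end Lemmas

/-- Fibonacci polynomials over ℤ[x] are monic of degree n. -/
lemma gfib_poly_monic (n : ℕ) :
    (gfib (Polynomial.X) (1 : Polynomial ℤ) (n + 1)).Monic ∧
      (gfib (Polynomial.X) (1 : Polynomial ℤ) (n + 1)).degree = n := by
  induction n using Nat.twoStepInduction with
  | zero => simp [gfib_one, Polynomial.monic_one]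
  | one =>
    have h2 : gfib (Polynomial.X) (1 : Polynomial ℤ) 2 = Polynomial.X := by
      rw [gfib_succ_succ, gfib_one, gfib_zero]; ring
    rw [show (1 : ℕ) + 1 = 2 from rfl, h2]
    simp [Polynomial.monic_X]
  | more n ih1 ih2 =>
    obtain ⟨h1m, h1d⟩ := ih1
    obtain ⟨h2m, h2d⟩ := ih2
    simp only [show n + 2 + 1 = n + 3 from rfl] at *
    rw [show (3 : ℕ) = 1 + 2 from rfl, ← Nat.add_assoc, gfib_succ_succ, one_mul]
    have hm : (Polynomial.X * gfib (Polynomial.X) (1 : Polynomial ℤ) (n + 1 + 1)).Monic :=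
      Polynomial.monic_X.mul h2m
    have hd : (Polynomial.X * gfib (Polynomial.X) (1 : Polynomial ℤ) (n + 1 + 1)).degree
        = ((n + 2 : ℕ) : WithBot ℕ) := by
      rw [Polynomial.degree_mul, Polynomial.degree_X, h2d]
      rw [show ((n + 2 : ℕ) : WithBot ℕ) = ((1 : ℕ) : WithBot ℕ) + ((n + 1 : ℕ) : WithBot ℕ)
        from by push_cast; ring]
      rfl
    have hlt : (gfib (Polynomial.X) (1 : Polynomial ℤ) (n + 1)).degree <
        (Polynomial.X * gfib (Polynomial.X) (1 : Polynomial ℤ) (n + 1 + 1)).degree := by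
      rw [hd, h1d]
      exact_mod_cast show n < n + 2 by omega
    refine ⟨hm.add_of_left hlt, ?_⟩
    rw [Polynomial.degree_add_eq_left_of_degree_lt hlt, hd]

open MvPolynomial

local notation "R2" => MvPolynomial (Fin 2) ℤ

lemma prime_X_mv (i : Fin 2) : Prime (X i : R2) := by
  have h0 : Prime (X 0 : R2) := by
    refine comap_prime (f := ((MvPolynomial.finSuccEquiv ℤ 1 : MvPolynomial (Fin 2) ℤ ≃ₐ[ℤ]
        Polynomial (MvPolynomial (Fin 1) ℤ)) : R2 →+* Polynomial (MvPolynomial (Fin 1) ℤ)))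
      (g := ((MvPolynomial.finSuccEquiv ℤ 1).symm : Polynomial (MvPolynomial (Fin 1) ℤ) →+* R2))
      (fun a => by simp) ?_
    have : ((MvPolynomial.finSuccEquiv ℤ 1 : MvPolynomial (Fin 2) ℤ ≃ₐ[ℤ]
        Polynomial (MvPolynomial (Fin 1) ℤ)) : R2 →+* Polynomial (MvPolynomial (Fin 1) ℤ)) (X 0)
        = Polynomial.X := MvPolynomial.finSuccEquiv_X_zero
    rw [this]
    exact Polynomial.prime_X
  refine comap_prime (f := ((MvPolynomial.renameEquiv ℤ (Equiv.swap (0 : Fin 2) i) :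
      R2 ≃ₐ[ℤ] R2) : R2 →+* R2))
    (g := ((MvPolynomial.renameEquiv ℤ (Equiv.swap (0 : Fin 2) i)).symm : R2 →+* R2))
    (fun a => by
      have hid : (⇑(Equiv.swap (0 : Fin 2) i) ∘ ⇑(Equiv.swap (0 : Fin 2) i)) = id :=
        funext fun x => Equiv.swap_apply_self _ _ _
      simp [hid]) ?_
  have : ((MvPolynomial.renameEquiv ℤ (Equiv.swap (0 : Fin 2) i) :
      R2 ≃ₐ[ℤ] R2) : R2 →+* R2) (X i) = X 0 := by
    simp [MvPolynomial.renameEquiv_apply, MvPolynomial.rename_X]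
  rw [this]
  exact h0

lemma X1_not_dvd_gfib (n : ℕ) : ¬ (X 1 : R2) ∣ gfib (X 0) (X 1) (n + 1) := by
  intro h
  obtain ⟨c, hc⟩ := gfib_eq_pow_add (X 0 : R2) (X 1) n
  rw [hc] at h
  have h2 : (X 1 : R2) ∣ (X 0) ^ n := by
    have := h.sub (dvd_mul_right (X 1 : R2) c)
    simpa using this
  have h3 : (X 1 : R2) ∣ (X 0) := (prime_X_mv 1).dvd_of_dvd_pow h2
  obtain ⟨c, hc⟩ := h3
  have := congrArg (MvPolynomial.eval (fun i : Fin 2 => if i = 0 then (1 : ℤ) else 0)) hc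
  simp at this

lemma isRelPrime_gfib (k : ℕ) (hk : 1 ≤ k) (d : R2) (hd : d ∣ gfib (X 0) (X 1) k) :
    IsRelPrime d (gfib (X 0) (X 1) (k + 1)) := by
  intro c hc1 hc2
  obtain ⟨j, rfl⟩ : ∃ j, k = j + 1 := ⟨k - 1, by omega⟩
  have hck : c ∣ gfib (X 0) (X 1) (j + 1) := hc1.trans hd
  have cass := gfib_cassini (X 0 : R2) (X 1) j
  have hct : c ∣ (-1 : R2) ^ j * (X 1) ^ j := by
    have e : (-1 : R2) ^ j * (X 1) ^ j =
        gfib (X 0) (X 1) (j + 1) ^ 2 - gfib (X 0) (X 1) (j + 2) * gfib (X 0) (X 1) j := by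
      rw [cass]; ring
    rw [e]
    exact dvd_sub (hck.trans (dvd_pow_self _ two_ne_zero)) (hc2.mul_right _)
  have hct' : c ∣ (X 1 : R2) ^ j := by
    have hu : IsUnit ((-1 : R2) ^ j) := (isUnit_one.neg).pow j
    exact (IsUnit.dvd_mul_left hu).mp hct
  rcases (dvd_prime_pow (prime_X_mv 1) j).mp hct' with ⟨i, _, hassoc⟩
  rcases Nat.eq_zero_or_pos i with rfl | hi
  · exact associated_one_iff_isUnit.mp (by simpa using hassoc)
  · exfalso
    apply X1_not_dvd_gfib j
    have hXi : (X 1 : R2) ∣ (X 1 : R2) ^ i := dvd_pow_self _ (by omega)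
    exact (hXi.trans hassoc.symm.dvd).trans hck

/-- The main gcd lemma. -/
lemma gfib_gcd : ∀ m : ℕ, ∀ n : ℕ, 1 ≤ m → 1 ≤ n → ∀ d : R2,
    (d ∣ gfib (X 0) (X 1) m ∧ d ∣ gfib (X 0) (X 1) n) ↔
      d ∣ gfib (X 0) (X 1) (Nat.gcd m n) := by
  intro m
  induction m using Nat.strong_induction_on with
  | _ m ih =>
  intro n hm hn d
  rcases Nat.eq_zero_or_pos (n % m) with hr | hr
  · have hdvd : m ∣ n := Nat.dvd_of_mod_eq_zero hr
    rw [Nat.gcd_eq_left hdvd]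
    constructor
    · exact fun h => h.1
    · intro h
      obtain ⟨k, rfl⟩ := hdvd
      exact ⟨h, h.trans (gfib_dvd_mul _ _ m k hm)⟩
  · set r := n % m with hrdef
    set q := n / m with hqdef
    have hrm : r < m := Nat.mod_lt n hm
    have hgcd : Nat.gcd m n = Nat.gcd r m := Nat.gcd_rec m n
    rw [hgcd, ← ih r hrm m hr hm d]
    have hn_eq : m * q + r = n := Nat.div_add_mod n m
    rcases Nat.eq_zero_or_pos q with hq | hq
    · have hnr : n = r := by rw [hq] at hn_eq; omega
      rw [hnr]
      exact and_comm
    · obtain ⟨p, hp⟩ : ∃ p, r = p + 1 := ⟨r - 1, by omega⟩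
      have key : gfib (X 0 : R2) (X 1) n =
          gfib (X 0) (X 1) (m * q + 1) * gfib (X 0) (X 1) r +
            X 1 * gfib (X 0) (X 1) (m * q) * gfib (X 0) (X 1) p := by
        rw [← hn_eq, hp]
        rw [show m * q + (p + 1) = m * q + p + 1 from by ring, gfib_add]
      have hmq1 : 1 ≤ m * q := Nat.mul_pos hm hq
      constructor
      · rintro ⟨h1, h2⟩
        refine ⟨?_, h1⟩
        have hmq : d ∣ gfib (X 0 : R2) (X 1) (m * q) := h1.trans (gfib_dvd_mul _ _ m q hm)
        have hrel := isRelPrime_gfib (m * q) hmq1 d hmq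
        have hdd : d ∣ gfib (X 0 : R2) (X 1) (m * q + 1) * gfib (X 0) (X 1) r := by
          have := h2.sub ((hmq.mul_left (X 1)).mul_right (gfib (X 0) (X 1) p))
          rw [key] at this
          simpa using this
        exact hrel.dvd_of_dvd_mul_left hdd
      · rintro ⟨h1, h2⟩
        refine ⟨h2, ?_⟩
        rw [key]
        exact dvd_add (h1.mul_left _)
          (((h2.trans (gfib_dvd_mul _ _ m q hm)).mul_left (X 1)).mul_right _)

open MvPolynomial in
theorem stmt6 (m n : ℕ) (hm : 1 ≤ m) (hn : 1 ≤ n) :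
    (∀ d : MvPolynomial (Fin 2) ℤ,
      (d ∣ gfib (X 0) (X 1) m ∧ d ∣ gfib (X 0) (X 1) n) ↔
        d ∣ gfib (X 0) (X 1) (Nat.gcd m n)) ∧
    (m ∣ n ↔ gfib (X 0 : MvPolynomial (Fin 2) ℤ) (X 1) m ∣ gfib (X 0) (X 1) n) := by
  refine ⟨fun d => gfib_gcd m n hm hn d, ?_, ?_⟩
  · intro h
    obtain ⟨k, rfl⟩ := h
    exact gfib_dvd_mul _ _ m k hm
  · intro h
    have h1 : gfib (X 0 : R2) (X 1) m ∣ gfib (X 0) (X 1) (Nat.gcd m n) :=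
      (gfib_gcd m n hm hn _).mp ⟨dvd_refl _, h⟩
    set g := Nat.gcd m n with hg
    have hgm : g ∣ m := Nat.gcd_dvd_left m n
    have hg1 : 1 ≤ g := Nat.pos_of_dvd_of_pos hgm hm
    -- map to ℤ[x]
    let φ : R2 →+* Polynomial ℤ :=
      (MvPolynomial.aeval (fun i : Fin 2 => if i = 0 then Polynomial.X else 1)).toRingHom
    have hmap : ∀ k, φ (gfib (X 0) (X 1) k) = gfib Polynomial.X (1 : Polynomial ℤ) k := by
      intro k
      rw [map_gfib]
      simp [φ]
    have h2 : gfib Polynomial.X (1 : Polynomial ℤ) m ∣ gfib Polynomial.X 1 g := by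
      rw [← hmap, ← hmap]
      exact map_dvd φ h1
    obtain ⟨m', rfl⟩ : ∃ m', m = m' + 1 := ⟨m - 1, by omega⟩
    obtain ⟨g', hg'⟩ : ∃ g', g = g' + 1 := ⟨g - 1, by omega⟩
    rw [hg'] at h2
    have hdle := Polynomial.degree_le_of_dvd h2 (gfib_poly_monic g').1.ne_zero
    rw [(gfib_poly_monic m').2, (gfib_poly_monic g').2] at hdle
    have hmg : m' + 1 ≤ g' + 1 := by exact_mod_cast Nat.succ_le_succ (by exact_mod_cast hdle)
    have hge : g = m' + 1 := by
      have : g ≤ m' + 1 := Nat.le_of_dvd (by omega) hgm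
      omega
    rw [← hge, hg]
    exact Nat.gcd_dvd_right _ _
end

section
/- For all n ≥ 0, Σ_{k=0}^{n} C(n,k) {k}_{s,t} = {n}_{s+2, t-s-1}, as polynomials in s,t. -/
open Finset

lemma gfib_key {R : Type*} [CommRing R] (g : ℕ → R) (n : ℕ) :
    ∑ k ∈ range (n+2), ((n+1).choose k : R) * g k
    = ∑ k ∈ range (n+1), (n.choose k : R) * g k
      + ∑ k ∈ range (n+1), (n.choose k : R) * g (k+1) := by
  rw [Finset.sum_range_succ' (fun k => ((n+1).choose k : R) * g k) (n+1),
      Finset.sum_range_succ' (fun k => ((n).choose k : R) * g k) n]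
  simp only [Nat.choose_succ_succ, Nat.cast_add, add_mul, Nat.choose_zero_right,
    Nat.cast_one, one_mul]
  rw [Finset.sum_add_distrib,
      Finset.sum_range_succ (fun k => ((n).choose (k+1) : R) * g (k+1)) n]
  simp only [Nat.choose_succ_self, Nat.cast_zero, zero_mul, add_zero]
  ring

theorem stmt9 {R : Type*} [CommRing R] (s t : R) (n : ℕ) :
    ∑ k ∈ Finset.range (n + 1), (n.choose k : R) * gfib s t k =
      gfib (s + 2) (t - s - 1) n := by
  suffices h : ∀ m, (∑ k ∈ range (m+1), (m.choose k : R) * gfib s t k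
        = gfib (s+2) (t-s-1) m)
      ∧ (∑ k ∈ range (m+1), (m.choose k : R) * gfib s t (k+1)
        = gfib (s+2) (t-s-1) (m+1) - gfib (s+2) (t-s-1) m) by
    exact (h n).1
  intro m
  induction m with
  | zero => simp [gfib]
  | succ m ih =>
    obtain ⟨hS, hT⟩ := ih
    have hrec : gfib (s+2) (t-s-1) (m+2)
        = (s+2) * gfib (s+2) (t-s-1) (m+1) + (t-s-1) * gfib (s+2) (t-s-1) m := rfl
    constructor
    · rw [gfib_key, hS, hT]; ring
    · rw [gfib_key (fun k => gfib s t (k+1)) m]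
      have h2 : ∑ k ∈ range (m+1), (m.choose k : R) * gfib s t (k+1+1)
          = s * (∑ k ∈ range (m+1), (m.choose k : R) * gfib s t (k+1))
            + t * (∑ k ∈ range (m+1), (m.choose k : R) * gfib s t k) := by
        rw [Finset.mul_sum, Finset.mul_sum, ← Finset.sum_add_distrib]
        refine Finset.sum_congr rfl fun k _ => ?_
        show (m.choose k : R) * gfib s t (k+2) = _
        rw [show gfib s t (k+2) = s * gfib s t (k+1) + t * gfib s t k from rfl]
        ring
      rw [h2, hS, hT, hrec]
      ring
end

section
/- For any integer d ≥ 2 and all n ≥ 1, ν_d({n}_{d,-1}) = 0 if n is odd, and ν_d({n}_{d,-1}) = ν_d(d·n/2) if n is even. -/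
namespace Stmt16Aux

/-- Abbreviation for the sequence in question. -/
def G (d : ℕ) (n : ℕ) : ℤ := gfib (d : ℤ) (-1) n

lemma G_rec (d n : ℕ) : G d (n+2) = (d:ℤ) * G d (n+1) + (-1) * G d n := rfl

/-- Companion matrix. -/
def A (d : ℕ) : Matrix (Fin 2) (Fin 2) ℤ := !![(d : ℤ), -1; 1, 0]

lemma pow_entries (d : ℕ) : ∀ n : ℕ, ((A d)^n) 0 0 = G d (n+1) ∧ ((A d)^n) 1 0 = G d n := by
  intro n
  induction n with
  | zero => simp [G, gfib, Matrix.one_apply]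
  | succ n ih =>
    rw [pow_succ']
    refine ⟨?_, ?_⟩
    · rw [Matrix.mul_apply, Fin.sum_univ_two, A]
      norm_num
      show (d:ℤ) * ((A d)^n) 0 0 + -(((A d)^n) 1 0) = G d (n+1+1)
      rw [ih.1, ih.2]
      show _ = gfib (d:ℤ) (-1) (n+2)
      rw [gfib]
      show _ = _ * G d (n+1) + _ * G d n
      ring
    · rw [Matrix.mul_apply, Fin.sum_univ_two, A]
      norm_num
      show ((A d)^n) 0 0 = G d (n+1)
      exact ih.1

lemma sq_A (d : ℕ) : (A d)^2 = (d:ℤ) • (A d) + (-1) := by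
  ext i j
  fin_cases i <;> fin_cases j <;>
    simp [A, pow_two, Matrix.mul_apply, Fin.sum_univ_two, Matrix.one_apply]

lemma gfib_two_mul (d m : ℕ) :
    G d (2*m) = ∑ k ∈ Finset.range (m+1), (m.choose k : ℤ) * ((d:ℤ)^k * (-1)^(m-k) * G d k) := by
  have h1 : ((A d)^(2*m)) 1 0 = G d (2*m) := (pow_entries d (2*m)).2
  rw [← h1, pow_mul, sq_A]
  have hc : Commute ((d:ℤ) • (A d)) (-1 : Matrix (Fin 2) (Fin 2) ℤ) :=
    (Commute.one_right _).neg_right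
  rw [hc.add_pow]
  rw [Matrix.sum_apply]
  apply Finset.sum_congr rfl
  intro k _
  have hneg : (-1 : Matrix (Fin 2) (Fin 2) ℤ) = (-1 : ℤ) • 1 := by simp
  rw [smul_pow, hneg, smul_pow, one_pow, smul_mul_assoc, mul_smul_comm, mul_one, smul_smul]
  have hcast : ((m.choose k : ℕ) : Matrix (Fin 2) (Fin 2) ℤ) = ((m.choose k : ℤ)) • 1 := by
    simp
  rw [hcast, mul_smul_comm, mul_one, Matrix.smul_apply, Matrix.smul_apply, (pow_entries d k).2]
  simp only [smul_eq_mul]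

lemma dvd_G_even (d : ℕ) (t : ℕ) : (d:ℤ) ∣ G d (2*t) := by
  induction t with
  | zero => simp [G, gfib]
  | succ t ih =>
    have h2 : 2*(t+1) = (2*t)+2 := by ring
    rw [h2, G_rec]
    exact dvd_add (dvd_mul_right _ _) (ih.mul_left _)

lemma G_odd_zmod (d : ℕ) (t : ℕ) : ((G d (2*t+1) : ℤ) : ZMod d) = (-1)^t := by
  induction t with
  | zero => simp [G, gfib]
  | succ t ih =>
    have h2 : 2*(t+1)+1 = (2*t+1)+2 := by ring
    rw [h2, G_rec]
    push_cast
    rw [ZMod.natCast_self, ih]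
    ring

lemma not_dvd_G_odd (d : ℕ) (hd : 2 ≤ d) (t : ℕ) : ¬ (d:ℤ) ∣ G d (2*t+1) := by
  intro h
  haveI : Fact (1 < d) := ⟨by omega⟩
  have h0 : ((G d (2*t+1) : ℤ) : ZMod d) = 0 := (ZMod.intCast_zmod_eq_zero_iff_dvd _ _).2 h
  rw [G_odd_zmod d t] at h0
  have hu : IsUnit (((-1 : ZMod d))^t) := (isUnit_one.neg).pow t
  exact hu.ne_zero h0

lemma not_pow_succ_dvd (d x : ℕ) (hd : 2 ≤ d) (hx : 0 < x) :
    ¬ d^(padicValNat d x + 1) ∣ x := by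
  rw [padicValNat_def' (show d ≠ 1 by omega) hx.ne']
  intro h
  have hfin : FiniteMultiplicity d x := Nat.finiteMultiplicity_iff.2 ⟨by omega, hx⟩
  have := hfin.le_multiplicity_of_pow_dvd h
  omega

lemma padicValNat_eq_of (d x k : ℕ) (hd : 2 ≤ d) (hx : 0 < x) (h1 : d^k ∣ x)
    (h2 : ¬d^(k+1) ∣ x) : padicValNat d x = k := by
  rw [padicValNat_def' (show d ≠ 1 by omega) hx.ne']
  exact multiplicity_eq_of_dvd_of_not_dvd h1 h2

lemma fact_le_of_lt_pow {p j c : ℕ} (hj : j ≠ 0) (hlt : j < p^(c+1)) :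
    j.factorization p ≤ c := by
  by_contra h
  have h1 : p ^ (c+1) ∣ j := dvd_trans (pow_dvd_pow p (by omega)) (Nat.ordProj_dvd j p)
  have := Nat.le_of_dvd (Nat.pos_of_ne_zero hj) h1
  omega

lemma key_dvd {d m j K g : ℕ} (hd : 2 ≤ d) (hj : 2 ≤ j) (hm : 0 < m) (hK : d^K ∣ m)
    (hg : Even j → d ∣ g) : d^(K+2) ∣ m.choose j * d^j * g := by
  have hd0 : d ≠ 0 := by omega
  rcases Nat.lt_or_ge m j with hmj | hjm
  · simp [Nat.choose_eq_zero_of_lt hmj]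
  rcases Nat.eq_zero_or_pos g with rfl | hgpos
  · simp
  have hC : 0 < m.choose j := Nat.choose_pos hjm
  have hne : m.choose j * d^j * g ≠ 0 := by positivity
  rw [← Nat.factorization_le_iff_dvd (by positivity) hne, Finsupp.le_def]
  intro p
  set e := d.factorization p with he
  have hLHS : (d^(K+2)).factorization p = (K+2) * e := by
    rw [Nat.factorization_pow]; simp [he]
  have hRHS : (m.choose j * d^j * g).factorization p
      = (m.choose j).factorization p + j * e + g.factorization p := by
    rw [Nat.factorization_mul (mul_ne_zero (by omega) (by positivity)) (by omega),
      Nat.factorization_mul (by omega) (by positivity), Nat.factorization_pow]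
    simp [he]
  rw [hLHS, hRHS]
  rcases Nat.eq_zero_or_pos e with h0 | hepos
  · simp [h0]
  have hp : p.Prime := by
    have hmem : p ∈ d.factorization.support := by rw [Finsupp.mem_support_iff]; omega
    rw [Nat.support_factorization] at hmem
    exact Nat.prime_of_mem_primeFactors hmem
  have hid : m * (m-1).choose (j-1) = m.choose j * j := by
    have h := Nat.add_one_mul_choose_eq (m-1) (j-1)
    have e1 : m - 1 + 1 = m := by omega
    have e2 : j - 1 + 1 = j := by omega
    simpa [Nat.succ_eq_add_one, e1, e2] using h
  have hC' : 0 < (m-1).choose (j-1) := Nat.choose_pos (by omega)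
  have h3 : m.factorization p + ((m-1).choose (j-1)).factorization p
      = (m.choose j).factorization p + j.factorization p := by
    have hcong := congrArg Nat.factorization hid
    rw [Nat.factorization_mul (by omega) (by omega),
      Nat.factorization_mul (by omega) (by omega)] at hcong
    have := DFunLike.congr_fun hcong p
    simpa using this
  have hKm : K * e ≤ m.factorization p := by
    have hle : (d^K).factorization ≤ m.factorization :=
      (Nat.factorization_le_iff_dvd (by positivity) (by omega)).2 hK
    have := hle p
    rwa [Nat.factorization_pow, Finsupp.smul_apply, smul_eq_mul, ← he] at this
  rcases Nat.even_or_odd j with hje | hjo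
  · have hge : e ≤ g.factorization p := by
      have hle : d.factorization ≤ g.factorization :=
        (Nat.factorization_le_iff_dvd (by omega) (by omega)).2 (hg hje)
      exact hle p
    have hbj : j.factorization p ≤ j - 1 := by
      apply fact_le_of_lt_pow (by omega)
      have h2j : j < 2^j := Nat.lt_two_pow_self
      have hpj : (2:ℕ)^j ≤ p^j := Nat.pow_le_pow_left hp.two_le j
      have ej : j - 1 + 1 = j := by omega
      rw [ej]
      omega
    calc (K+2) * e = K*e + 2*e := by ring
      _ ≤ ((m.choose j).factorization p + j.factorization p) + 2*e := by omega
      _ ≤ ((m.choose j).factorization p + (j-1)*e) + 2*e := by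
          have : j.factorization p ≤ (j-1)*e := le_trans hbj (Nat.le_mul_of_pos_right _ hepos)
          omega
      _ = (m.choose j).factorization p + (j+1)*e := by
          have ej : j - 1 + 2 = j + 1 := by omega
          rw [add_assoc, ← add_mul, ej]
      _ = (m.choose j).factorization p + j*e + e := by ring
      _ ≤ (m.choose j).factorization p + j * e + g.factorization p := by omega
  · have hbj : j.factorization p ≤ j - 2 := by
      rcases eq_or_ne p 2 with rfl | hp2
      · rw [Nat.factorization_eq_zero_of_not_dvd (by
          rcases hjo with ⟨s, hs⟩; omega)]
        omega
      · have hp3 : 3 ≤ p := by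
          have := hp.two_le
          rcases Nat.lt_or_ge p 3 with h | h
          · omega
          · exact h
        apply fact_le_of_lt_pow (by omega)
        have ej : j - 2 + 1 = j - 1 := by omega
        rw [ej]
        have h1 : j - 1 < 2^(j-1) := Nat.lt_two_pow_self
        have h2 : (2:ℕ)^(j-1) < 3^(j-1) := Nat.pow_lt_pow_left (by norm_num) (by omega)
        have h3' : (3:ℕ)^(j-1) ≤ p^(j-1) := Nat.pow_le_pow_left hp3 (j-1)
        omega
    calc (K+2) * e = K*e + 2*e := by ring
      _ ≤ ((m.choose j).factorization p + j.factorization p) + 2*e := by omega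
      _ ≤ ((m.choose j).factorization p + (j-2)*e) + 2*e := by
          have : j.factorization p ≤ (j-2)*e := le_trans hbj (Nat.le_mul_of_pos_right _ hepos)
          omega
      _ = (m.choose j).factorization p + j*e := by
          have ej : j - 2 + 2 = j := by omega
          rw [add_assoc, ← add_mul, ej]
      _ ≤ (m.choose j).factorization p + j * e + g.factorization p := by omega

/-- each tail term is divisible by d^(K+2) -/
lemma term_dvd (d m j K : ℕ) (hd : 2 ≤ d) (hj : 2 ≤ j) (hm : 0 < m) (hK : d^K ∣ m) :
    ((d:ℤ))^(K+2) ∣ (m.choose j : ℤ) * ((d:ℤ)^j * (-1)^(m-j) * G d j) := by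
  rw [← Int.dvd_natAbs]
  have hg : Even j → d ∣ (G d j).natAbs := by
    rintro ⟨s, hs⟩
    have h1 : (d:ℤ) ∣ G d j := by
      rw [show j = 2*s by omega]; exact dvd_G_even d s
    have := Int.natAbs_dvd_natAbs.2 h1
    simpa using this
  have hnat : d^(K+2) ∣ ((m.choose j : ℤ) * ((d:ℤ)^j * (-1)^(m-j) * G d j)).natAbs := by
    have habs : ((m.choose j : ℤ) * ((d:ℤ)^j * (-1)^(m-j) * G d j)).natAbs
        = m.choose j * d^j * (G d j).natAbs := by
      simp [Int.natAbs_mul, Int.natAbs_pow]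
      ring
    rw [habs]
    exact key_dvd hd hj hm hK hg
  have := Int.natCast_dvd_natCast.2 hnat
  rwa [Nat.cast_pow] at this

end Stmt16Aux

open Stmt16Aux in
theorem stmt16 (d : ℕ) (hd : 2 ≤ d) (n : ℕ) (hn : 1 ≤ n) :
    (Odd n → padicValInt d (gfib (d : ℤ) (-1) n) = 0) ∧
    (Even n → padicValInt d (gfib (d : ℤ) (-1) n) = padicValInt d ((d : ℤ) * n / 2)) := by
  constructor
  · rintro ⟨t, ht⟩
    have hnd : ¬ (d:ℤ) ∣ gfib (d:ℤ) (-1) n := by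
      rw [show n = 2*t+1 by omega]
      exact not_dvd_G_odd d hd t
    show padicValNat d (gfib (d:ℤ) (-1) n).natAbs = 0
    apply padicValNat.eq_zero_of_not_dvd
    intro h
    apply hnd
    have := Int.natCast_dvd_natCast.2 h
    exact Int.dvd_natAbs.1 (by exact_mod_cast this)
  · rintro ⟨m, hmeq⟩
    have hm : 0 < m := by omega
    have hn2 : n = 2*m := by omega
    set K := padicValNat d m with hKdef
    have hdK : d^K ∣ m := pow_padicValNat_dvd
    have hndK : ¬ d^(K+1) ∣ m := not_pow_succ_dvd d m hd hm
    -- RHS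
    have hrhs : (d:ℤ) * n / 2 = ((d*m : ℕ) : ℤ) := by
      rw [hn2]
      push_cast
      rw [show (d:ℤ)*(2*m) = 2*((d:ℤ)*m) by ring, Int.mul_ediv_cancel_left _ two_ne_zero]
    have hvalr : padicValInt d ((d:ℤ) * n / 2) = K + 1 := by
      rw [hrhs]
      show padicValNat d ((d*m : ℕ) : ℤ).natAbs = K + 1
      rw [Int.natAbs_natCast]
      apply padicValNat_eq_of d _ _ hd (by positivity)
      · obtain ⟨c, hc⟩ := hdK
        exact ⟨c, by rw [hc, pow_succ]; ring⟩
      · intro ⟨c, hc⟩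
        apply hndK
        refine ⟨c, ?_⟩
        have hdm : d * m = d * (d^(K+1) * c) := by rw [hc, pow_succ, pow_succ]; ring
        exact Nat.eq_of_mul_eq_mul_left (by omega) hdm
    -- LHS
    set f : ℕ → ℤ := fun k => (m.choose k : ℤ) * ((d:ℤ)^k * (-1)^(m-k) * G d k) with hf
    have hsum : G d n = ∑ k ∈ Finset.range (m+1), f k := by
      rw [hn2]; exact gfib_two_mul d m
    have hsplit1 : ∑ k ∈ Finset.range (m+1), f k
        = ∑ i ∈ Finset.range m, f (i+1) + f 0 := Finset.sum_range_succ' f m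
    have hm1 : m = (m-1) + 1 := by omega
    have hsplit2 : ∑ i ∈ Finset.range m, f (i+1)
        = ∑ i ∈ Finset.range (m-1), f (i+2) + f 1 := by
      rw [hm1]
      exact Finset.sum_range_succ' (fun i => f (i+1)) (m-1)
    have hf0 : f 0 = 0 := by simp [hf, G, gfib]
    have hf1 : f 1 = (m:ℤ) * (d:ℤ) * (-1)^(m-1) := by
      simp only [hf]
      show (m.choose 1 : ℤ) * ((d:ℤ)^1 * (-1)^(m-1) * gfib (d:ℤ) (-1) 1) = _
      rw [gfib, Nat.choose_one_right]
      push_cast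
      ring
    have hT : ((d:ℤ))^(K+2) ∣ ∑ i ∈ Finset.range (m-1), f (i+2) := by
      apply Finset.dvd_sum
      intro i _
      exact term_dvd d m (i+2) K hd (by omega) hm hdK
    obtain ⟨c, hc⟩ := hT
    have hG : G d n = (m:ℤ) * (d:ℤ) * (-1)^(m-1) + (d:ℤ)^(K+2) * c := by
      rw [hsum, hsplit1, hsplit2, hf0, hf1, hc]
      ring
    have hdvd1 : ((d:ℤ))^(K+1) ∣ G d n := by
      rw [hG]
      apply dvd_add
      · obtain ⟨u, hu⟩ := hdK
        refine ⟨(u:ℤ) * (-1)^(m-1), ?_⟩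
        rw [show ((m:ℤ)) = ((d^K * u : ℕ) : ℤ) by rw [← hu]]
        push_cast
        rw [pow_succ]
        ring
      · exact Dvd.dvd.mul_right (pow_dvd_pow ((d:ℤ)) (by omega)) c
    have hndvd2 : ¬ ((d:ℤ))^(K+2) ∣ G d n := by
      intro h
      have h1 : ((d:ℤ))^(K+2) ∣ (m:ℤ) * (d:ℤ) * (-1)^(m-1) := by
        have := dvd_sub h (Dvd.intro c rfl)
        rw [hG] at this
        simpa using this
      have h2 : ((d:ℤ))^(K+2) ∣ (m:ℤ) * (d:ℤ) := by
        have := h1.mul_right ((-1:ℤ)^(m-1))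
        have heq : (m:ℤ) * (d:ℤ) * (-1)^(m-1) * (-1)^(m-1) = (m:ℤ) * (d:ℤ) := by
          rw [mul_assoc, ← pow_add, ← two_mul, pow_mul, neg_one_sq, one_pow, mul_one]
        rwa [heq] at this
      have h3 : d^(K+2) ∣ m * d := by
        have : ((d^(K+2) : ℕ) : ℤ) ∣ ((m * d : ℕ) : ℤ) := by push_cast; exact h2
        exact_mod_cast this
      apply hndK
      obtain ⟨c', hc'⟩ := h3
      refine ⟨c', ?_⟩
      have hdm : d * m = d * (d^(K+1) * c') := by
        calc d * m = m * d := by ring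
          _ = d^(K+2) * c' := hc'
          _ = d * (d^(K+1) * c') := by rw [pow_succ]; ring
      exact Nat.eq_of_mul_eq_mul_left (by omega) hdm
    have hGne : (G d n).natAbs ≠ 0 := by
      intro h0
      apply hndvd2
      have : G d n = 0 := by
        rwa [Int.natAbs_eq_zero] at h0
      simp [this]
    show padicValNat d (gfib (d:ℤ) (-1) n).natAbs = padicValInt d ((d:ℤ) * n / 2)
    rw [hvalr]
    apply padicValNat_eq_of d _ _ hd (Nat.pos_of_ne_zero hGne)
    · have : ((d:ℤ)^(K+1)).natAbs ∣ (G d n).natAbs := Int.natAbs_dvd_natAbs.2 hdvd1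
      simpa [Int.natAbs_pow] using this
    · intro hcon
      apply hndvd2
      have : ((d:ℤ))^(K+2) ∣ ((G d n).natAbs : ℤ) := by
        exact_mod_cast Int.natCast_dvd_natCast.2 hcon
      exact Int.dvd_natAbs.1 this
end

section
/- For r, m, n positive integers and any integers s,t: {rn}·{r(n+m-1)} − {r(n-1)}·{r(n+m)} = (−t)^{r(n-1)}·{r}·{rm}. -/
lemma gfib_rec {R : Type*} [CommRing R] (s t : R) (n : ℕ) :
    gfib s t (n + 2) = s * gfib s t (n + 1) + t * gfib s t n := rfl

lemma gfib_step {R : Type*} [CommRing R] (s t : R) (a d : ℕ) : ∀ k,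
    gfib s t (a + 1 + k) * gfib s t (a + 1 + d) -
      gfib s t (a + 1) * gfib s t (a + 1 + k + d) =
    -t * (gfib s t (a + k) * gfib s t (a + d) -
      gfib s t a * gfib s t (a + k + d)) := by
  intro k
  induction k using Nat.twoStepInduction with
  | zero => simp
  | one =>
      have e1 : a + 1 + 1 = a + 2 := by omega
      have e2 : a + 1 + 1 + d = a + d + 2 := by omega
      have e3 : a + 1 + d = a + d + 1 := by omega
      have e4 : a + 1 + d = a + d + 1 := by omega
      rw [e1, e2, e3, gfib_rec, gfib_rec]
      ring
  | more k ih0 ih1 =>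
      have e1 : a + 1 + (k + 2) = a + 1 + k + 2 := by omega
      have e2 : a + 1 + (k + 2) + d = a + 1 + k + d + 2 := by omega
      have e3 : a + (k + 2) = a + k + 2 := by omega
      have e4 : a + (k + 2) + d = a + k + d + 2 := by omega
      have e5 : a + 1 + (k + 1) = a + 1 + k + 1 := by omega
      have e6 : a + 1 + (k + 1) + d = a + 1 + k + d + 1 := by omega
      have e7 : a + (k + 1) = a + k + 1 := by omega
      have e8 : a + (k + 1) + d = a + k + d + 1 := by omega
      rw [e2, e1, e4, e3, gfib_rec, gfib_rec, gfib_rec, gfib_rec]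
      rw [e6, e5, e8, e7] at ih1
      linear_combination s * ih1 + t * ih0

lemma gfib_catalan {R : Type*} [CommRing R] (s t : R) (k d : ℕ) : ∀ a,
    gfib s t (a + k) * gfib s t (a + d) -
      gfib s t a * gfib s t (a + k + d) =
    (-t) ^ a * gfib s t k * gfib s t d := by
  intro a
  induction a with
  | zero => simp [gfib]
  | succ a ih =>
      have := gfib_step s t a d k
      rw [this, ih, pow_succ]
      ring

theorem stmt17 {R : Type*} [CommRing R] (s t : R) (r m n : ℕ)
    (hr : 1 ≤ r) (hm : 1 ≤ m) (hn : 1 ≤ n) :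
    gfib s t (r * n) * gfib s t (r * (n + m - 1)) -
      gfib s t (r * (n - 1)) * gfib s t (r * (n + m)) =
    (-t) ^ (r * (n - 1)) * gfib s t r * gfib s t (r * m) := by
  obtain ⟨n, rfl⟩ : ∃ n', n = n' + 1 := ⟨n - 1, by omega⟩
  have e1 : r * (n + 1) = r * n + r := by ring
  have e2 : r * (n + 1 + m - 1) = r * n + r * m := by
    have : n + 1 + m - 1 = n + m := by omega
    rw [this]; ring
  have e3 : n + 1 - 1 = n := by omega
  have e4 : r * (n + 1 + m) = r * n + r + r * m := by ring
  rw [e1, e2, e3, e4]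
  exact gfib_catalan s t r (r * m) (r * n)
end
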